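/- If u is a polynomial of degree at most k in four variables vanishing on all five facet hyperplanes of the simplex with barycentric coordinates λ1,...,λ5, then u = λ1 λ2 λ3 λ4 λ5 ψ for some polynomial ψ of degree at most k−5; moreover, if additionally the integral of u·ψ over the simplex vanishes, then u = 0. -/

import Mathlib

open MvPolynomial MeasureTheory

/-- Barycentric coordinates of the reference 4-simplex with vertices
`0, e₁, e₂, e₃, e₄`: the coordinate functions `x₁,…,x₄` and `1 − ∑ x_i`. -/
noncomputable def lam : Fin 5 → MvPolynomial (Fin 4) ℝ := fun i =>
  if h : (i : ℕ) < 4 then X (⟨i, h⟩ : Fin 4) else 1 - ∑ j, X j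

namespace BubbleAux

noncomputable def s : Fin 4 → MvPolynomial (Fin 4) ℝ :=
  fun j => if (j : ℕ) = 0 then 1 - ∑ t, X t else X j

noncomputable def sig : MvPolynomial (Fin 4) ℝ →ₐ[ℝ] MvPolynomial (Fin 4) ℝ := aeval s

lemma sig_X0 : sig (X 0) = 1 - ∑ t, X t := by simp [sig, s]

lemma sig_sig (p : MvPolynomial (Fin 4) ℝ) : sig (sig p) = p := by
  have h : sig.comp sig = AlgHom.id ℝ (MvPolynomial (Fin 4) ℝ) := by
    apply MvPolynomial.algHom_ext
    intro j
    fin_cases j <;>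
      · simp [sig, s, Fin.sum_univ_four, show ((1 : Fin 4) : ℕ) = 1 by decide,
          show ((2 : Fin 4) : ℕ) = 2 by decide, show ((3 : Fin 4) : ℕ) = 3 by decide]
        try ring
  have := DFunLike.congr_fun h p
  simpa using this

lemma eval_aeval (f : Fin 4 → MvPolynomial (Fin 4) ℝ) (x : Fin 4 → ℝ)
    (p : MvPolynomial (Fin 4) ℝ) :
    eval x (aeval f p) = eval (fun j => eval x (f j)) p := by
  induction p using MvPolynomial.induction_on with
  | C a => simp
  | add p q hp hq => simp only [map_add, hp, hq]
  | mul_X p j hp => simp only [map_mul, aeval_X, eval_X, hp]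

lemma eval_sig (x : Fin 4 → ℝ) (p : MvPolynomial (Fin 4) ℝ) :
    eval x (sig p) = eval (fun j : Fin 4 => if (j : ℕ) = 0 then 1 - ∑ t, x t else x j) p := by
  rw [sig, eval_aeval]
  have h : (fun j => eval x (s j)) =
      fun j : Fin 4 => if (j : ℕ) = 0 then 1 - ∑ t, x t else x j := by
    funext j
    by_cases hj : (j : ℕ) = 0 <;> simp [s, hj]
  rw [h]

end BubbleAux
namespace BubbleAux

lemma X_dvd_sub_aeval (i : Fin 4) (p : MvPolynomial (Fin 4) ℝ) :
    X i ∣ p - aeval (Function.update X i 0) p := by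
  induction p using MvPolynomial.induction_on with
  | C a => simp
  | add p q hp hq =>
      have : p + q - aeval (Function.update X i 0) (p + q) =
          (p - aeval (Function.update X i 0) p) + (q - aeval (Function.update X i 0) q) := by
        rw [map_add]; ring
      rw [this]; exact dvd_add hp hq
  | mul_X p j hp =>
      by_cases hj : j = i
      · subst hj
        have : p * X j - aeval (Function.update X j 0) (p * X j) = p * X j := by
          rw [map_mul, aeval_X, Function.update_self]; ring
        rw [this]; exact Dvd.intro_left p rfl
      · have : p * X j - aeval (Function.update X i 0) (p * X j) =
            (p - aeval (Function.update X i 0) p) * X j := by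
          rw [map_mul, aeval_X, Function.update_of_ne hj]; ring
        rw [this]; exact hp.mul_right _
    
lemma X_dvd_of_vanish (i : Fin 4) (p : MvPolynomial (Fin 4) ℝ)
    (h : ∀ x : Fin 4 → ℝ, x i = 0 → eval x p = 0) : X i ∣ p := by
  have h0 : (aeval (Function.update X i 0) p : MvPolynomial (Fin 4) ℝ) = 0 := by
    apply MvPolynomial.funext (q := 0)
    intro x
    rw [eval_aeval, map_zero]
    have hfun : (fun j => eval x (Function.update X i 0 j)) = Function.update x i 0 := by
      funext j
      by_cases hj : j = i
      · subst hj; simp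
      · simp [Function.update_of_ne hj]
    rw [hfun]
    exact h _ (Function.update_self i 0 x)
  have := X_dvd_sub_aeval i p
  rwa [h0, sub_zero] at this

lemma prime_X (i : Fin 4) : Prime (X i : MvPolynomial (Fin 4) ℝ) := by
  let e := (renameEquiv ℝ (Equiv.swap i 0)).trans (finSuccEquiv ℝ 3)
  rw [← MulEquiv.prime_iff e.toRingEquiv.toMulEquiv]
  have he : e (X i) = Polynomial.X := by
    show (finSuccEquiv ℝ 3) ((renameEquiv ℝ (Equiv.swap i 0)) (X i)) = Polynomial.X
    rw [renameEquiv_apply, rename_X, Equiv.swap_apply_left, finSuccEquiv_X_zero]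
  show Prime (e (X i))
  rw [he]
  exact Polynomial.prime_X

lemma prime_lam (i : Fin 5) : Prime (lam i) := by
  by_cases h : (i : ℕ) < 4
  · rw [lam, dif_pos h]; exact prime_X _
  · rw [lam, dif_neg h]
    have h1 : sig (1 - ∑ j, X j) = X 0 := by
      rw [← sig_X0, sig_sig]
    exact comap_prime (f := sig.toRingHom) (g := sig.toRingHom) sig_sig
      (by rw [AlgHom.toRingHom_eq_coe, RingHom.coe_coe, h1]; exact prime_X 0)

lemma lam_ne_zero (i : Fin 5) : lam i ≠ 0 := (prime_lam i).ne_zero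

lemma not_lam_dvd_lam {i j : Fin 5} (hij : i ≠ j) : ¬ lam i ∣ lam j := by
  have key : ∃ x : Fin 4 → ℝ, eval x (lam i) = 0 ∧ eval x (lam j) ≠ 0 := by
    by_cases hj : (j : ℕ) < 4
    · refine ⟨fun t => if t = (⟨(j : ℕ), hj⟩ : Fin 4) then 1 else 0, ?_, ?_⟩
      · by_cases hi : (i : ℕ) < 4
        · rw [lam, dif_pos hi, eval_X]
          have : (⟨(i : ℕ), hi⟩ : Fin 4) ≠ ⟨(j : ℕ), hj⟩ := by
            simp only [ne_eq, Fin.mk.injEq]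
            exact fun h => hij (Fin.ext h)
          simp [this]
        · rw [lam, dif_neg hi]
          simp only [map_sub, map_one, map_sum, eval_X]
          rw [Finset.sum_ite_eq' Finset.univ (⟨(j : ℕ), hj⟩ : Fin 4) (fun _ => (1 : ℝ))]
          simp
      · rw [lam, dif_pos hj, eval_X]
        simp
    · refine ⟨0, ?_, ?_⟩
      · have hi : (i : ℕ) < 4 := by omega
        rw [lam, dif_pos hi, eval_X]; rfl
      · rw [lam, dif_neg hj]
        simp
  obtain ⟨x, h0, hne⟩ := key
  rintro ⟨c, hc⟩
  apply hne
  rw [hc, map_mul, h0, zero_mul]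

end BubbleAux
namespace BubbleAux

lemma lam_dvd_of_vanish (i : Fin 5) (u : MvPolynomial (Fin 4) ℝ)
    (h : ∀ x : Fin 4 → ℝ, eval x (lam i) = 0 → eval x u = 0) : lam i ∣ u := by
  by_cases hi : (i : ℕ) < 4
  · rw [lam, dif_pos hi]
    apply X_dvd_of_vanish
    intro x hx
    apply h
    rw [lam, dif_pos hi, eval_X]
    exact hx
  · rw [lam, dif_neg hi]
    have hX : X 0 ∣ sig u := by
      apply X_dvd_of_vanish
      intro x hx
      rw [eval_sig]
      apply h
      rw [lam, dif_neg hi]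
      simp only [map_sub, map_one, map_sum, eval_X]
      rw [Fin.sum_univ_four]
      norm_num [show ((1 : Fin 4) : ℕ) = 1 by decide, show ((2 : Fin 4) : ℕ) = 2 by decide,
        show ((3 : Fin 4) : ℕ) = 3 by decide]
      rw [Fin.sum_univ_four]
      linarith [hx]
    have := map_dvd sig hX
    rw [sig_sig, sig_X0] at this
    exact this

lemma prod_lam_dvd (u : MvPolynomial (Fin 4) ℝ) (h : ∀ i, lam i ∣ u) :
    (∏ i, lam i) ∣ u := by
  suffices H : ∀ s : Finset (Fin 5), (∏ i ∈ s, lam i) ∣ u from H Finset.univ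
  intro s
  induction s using Finset.induction_on with
  | empty => simpa using one_dvd u
  | insert a t hnotmem ih =>
      obtain ⟨b, hb⟩ := ih
      have hdvd : lam a ∣ (∏ i ∈ t, lam i) * b := hb ▸ h a
      rcases (prime_lam a).2.2 _ _ hdvd with hc | hc
      · exfalso
        obtain ⟨j, hj, hdj⟩ := (Prime.dvd_finset_prod_iff (prime_lam a) _).mp hc
        have : a ≠ j := fun h' => hnotmem (h' ▸ hj)
        exact not_lam_dvd_lam this hdj
      · obtain ⟨c, hc'⟩ := hc
        refine ⟨c, ?_⟩
        rw [Finset.prod_insert hnotmem, hb, hc']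
        ring

end BubbleAux
namespace BubbleAux

lemma deg_X_mul (i : Fin 4) (b : MvPolynomial (Fin 4) ℝ) (hb : b ≠ 0) :
    b.totalDegree + 1 ≤ (X i * b).totalDegree := by
  obtain ⟨m, hm, hsup⟩ := Finset.exists_mem_eq_sup b.support
    (MvPolynomial.support_nonempty.mpr hb) (fun s => s.sum fun _ n => n)
  have hc : coeff (Finsupp.single i 1 + m) (X i * b) = coeff m b := coeff_X_mul m i b
  have hmem : (Finsupp.single i 1 + m) ∈ (X i * b).support := by
    rw [MvPolynomial.mem_support_iff, hc]
    exact MvPolynomial.mem_support_iff.mp hm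
  have hle := MvPolynomial.le_totalDegree hmem
  have hsum : ((Finsupp.single i 1 + m).sum fun _ n => n) =
      1 + (m.sum fun _ n => n) := by
    rw [Finsupp.sum_add_index' (fun _ => rfl) (fun _ _ _ => rfl)]
    rw [Finsupp.sum_single_index rfl]
  rw [hsum] at hle
  have : b.totalDegree = m.sum fun _ n => n := hsup
  omega

lemma totalDegree_aeval_le (f : Fin 4 → MvPolynomial (Fin 4) ℝ)
    (hf : ∀ j, (f j).totalDegree ≤ 1) (p : MvPolynomial (Fin 4) ℝ) :
    (aeval f p).totalDegree ≤ p.totalDegree := by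
  conv_lhs => rw [p.as_sum]
  rw [map_sum]
  refine (MvPolynomial.totalDegree_finset_sum _ _).trans ?_
  refine Finset.sup_le fun m hm => ?_
  rw [aeval_monomial]
  refine (MvPolynomial.totalDegree_mul _ _).trans ?_
  have h1 : (algebraMap ℝ (MvPolynomial (Fin 4) ℝ) (coeff m p)).totalDegree = 0 := by
    rw [MvPolynomial.algebraMap_eq]; exact MvPolynomial.totalDegree_C _
  rw [h1, zero_add]
  have h2 : (m.prod fun j k => f j ^ k).totalDegree ≤ m.sum fun _ n => n := by
    refine (MvPolynomial.totalDegree_finset_prod _ _).trans ?_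
    have hterm : ∀ j ∈ m.support, (f j ^ m j).totalDegree ≤ m j := fun j _ =>
      (MvPolynomial.totalDegree_pow _ _).trans
        (le_trans (Nat.mul_le_mul (le_refl (m j)) (hf j)) (le_of_eq (Nat.mul_one _)))
    calc ∑ j ∈ m.support, (f j ^ m j).totalDegree ≤ ∑ j ∈ m.support, m j :=
          Finset.sum_le_sum hterm
      _ = m.sum fun _ n => n := rfl
  exact h2.trans (MvPolynomial.le_totalDegree hm)

lemma deg_s_le (j : Fin 4) : (s j).totalDegree ≤ 1 := by
  rw [s]
  split
  · refine (MvPolynomial.totalDegree_sub _ _).trans ?_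
    simp only [MvPolynomial.totalDegree_one, zero_le, max_le_iff, true_and]
    exact (MvPolynomial.totalDegree_finset_sum _ _).trans
      (Finset.sup_le fun t _ => by rw [MvPolynomial.totalDegree_X])
  · rw [MvPolynomial.totalDegree_X]

lemma deg_sig_le (p : MvPolynomial (Fin 4) ℝ) : (sig p).totalDegree ≤ p.totalDegree :=
  totalDegree_aeval_le s deg_s_le p

lemma deg_sig_eq (p : MvPolynomial (Fin 4) ℝ) : (sig p).totalDegree = p.totalDegree := by
  refine le_antisymm (deg_sig_le p) ?_
  conv_lhs => rw [← sig_sig p]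
  exact deg_sig_le _

lemma deg_lam_mul (i : Fin 5) (b : MvPolynomial (Fin 4) ℝ) (hb : b ≠ 0) :
    b.totalDegree + 1 ≤ (lam i * b).totalDegree := by
  by_cases hi : (i : ℕ) < 4
  · rw [lam, dif_pos hi]
    exact deg_X_mul _ b hb
  · rw [lam, dif_neg hi]
    have hb' : sig b ≠ 0 := by
      intro h
      apply hb
      rw [← sig_sig b, h, map_zero]
    have h1 : ((1 - ∑ j, X j : MvPolynomial (Fin 4) ℝ) * b).totalDegree =
        (sig ((1 - ∑ j, X j) * b)).totalDegree := (deg_sig_eq _).symm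
    have h2 : sig ((1 - ∑ j, (X j : MvPolynomial (Fin 4) ℝ)) * b) = X 0 * sig b := by
      rw [map_mul, ← sig_X0, sig_sig]
    have h3 := deg_X_mul 0 (sig b) hb'
    rw [deg_sig_eq] at h3
    rw [h1, h2]
    exact h3

end BubbleAux
namespace BubbleAux

lemma continuous_eval (p : MvPolynomial (Fin 4) ℝ) :
    Continuous fun x : Fin 4 → ℝ => eval x p := by
  induction p using MvPolynomial.induction_on with
  | C a => simpa using continuous_const
  | add p q hp hq => simp only [map_add]; exact hp.add hq
  | mul_X p j hp => simp only [map_mul, eval_X]; exact hp.mul (continuous_apply j)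

lemma eq_zero_of_eqOn_open (p : MvPolynomial (Fin 4) ℝ) (S : Set (Fin 4 → ℝ))
    (hS : IsOpen S) (hne : S.Nonempty) (hz : ∀ x ∈ S, eval x p = 0) : p = 0 := by
  obtain ⟨z₀, hz₀⟩ := hne
  have han : AnalyticOnNhd ℝ (fun x : Fin 4 → ℝ => eval x p) Set.univ :=
    AnalyticOnNhd.eval_mvPolynomial p
  have hev : (fun x : Fin 4 → ℝ => eval x p) =ᶠ[nhds z₀] 0 := by
    filter_upwards [hS.mem_nhds hz₀] with x hx using hz x hx
  have h := han.eqOn_zero_of_preconnected_of_eventuallyEq_zero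
    isPreconnected_univ (Set.mem_univ z₀) hev
  apply MvPolynomial.funext (q := 0)
  intro x
  simpa using h (Set.mem_univ x)

end BubbleAux
namespace BubbleAux

lemma eval_lam (i : Fin 5) (x : Fin 4 → ℝ) :
    eval x (lam i) = if h : (i : ℕ) < 4 then x ⟨i, h⟩ else 1 - ∑ j, x j := by
  rw [lam]
  split
  · rw [eval_X]
  · simp

lemma eval_lam_nonneg {x : Fin 4 → ℝ} (hx : (∀ i, 0 ≤ x i) ∧ ∑ i, x i ≤ 1)
    (i : Fin 5) : 0 ≤ eval x (lam i) := by
  rw [eval_lam]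
  split
  · exact hx.1 _
  · linarith [hx.2]

end BubbleAux


/-- If a polynomial `u` of degree at most `k` in four variables vanishes on all
five facet hyperplanes of the simplex (zero sets of the barycentric coordinates
`λ₁,…,λ₅`), then `u = λ₁λ₂λ₃λ₄λ₅ ψ` with `deg ψ ≤ k − 5`; and if moreover
`∫_K u·ψ = 0` over the simplex, then `u = 0`. -/
theorem bubble_factorization (k : ℕ) (u : MvPolynomial (Fin 4) ℝ)
    (hu : u.totalDegree ≤ k)
    (hvan : ∀ i : Fin 5, ∀ x : Fin 4 → ℝ, eval x (lam i) = 0 → eval x u = 0) :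
    ∃ ψ : MvPolynomial (Fin 4) ℝ,
      ψ.totalDegree ≤ k - 5 ∧
      u = (∏ i, lam i) * ψ ∧
      ((∫ x in {x : Fin 4 → ℝ | (∀ i, 0 ≤ x i) ∧ (∑ i, x i) ≤ 1},
          eval x u * eval x ψ) = 0 → u = 0) := by
  classical
  by_cases hu0 : u = 0
  · exact ⟨0, by simp, by simp [hu0], fun _ => hu0⟩
  have hdvd : ∀ i, lam i ∣ u := fun i => BubbleAux.lam_dvd_of_vanish i u (hvan i)
  obtain ⟨ψ, hψ⟩ := BubbleAux.prod_lam_dvd u hdvd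
  have hψ0 : ψ ≠ 0 := by
    rintro rfl
    rw [mul_zero] at hψ
    exact hu0 hψ
  refine ⟨ψ, ?_, hψ, fun hint => ?_⟩
  · -- degree bound
    have step4 := BubbleAux.deg_lam_mul 4 ψ hψ0
    have n4 : lam 4 * ψ ≠ 0 := mul_ne_zero (BubbleAux.lam_ne_zero 4) hψ0
    have step3 := BubbleAux.deg_lam_mul 3 _ n4
    have n3 : lam 3 * (lam 4 * ψ) ≠ 0 := mul_ne_zero (BubbleAux.lam_ne_zero 3) n4
    have step2 := BubbleAux.deg_lam_mul 2 _ n3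
    have n2 : lam 2 * (lam 3 * (lam 4 * ψ)) ≠ 0 := mul_ne_zero (BubbleAux.lam_ne_zero 2) n3
    have step1 := BubbleAux.deg_lam_mul 1 _ n2
    have n1 : lam 1 * (lam 2 * (lam 3 * (lam 4 * ψ))) ≠ 0 :=
      mul_ne_zero (BubbleAux.lam_ne_zero 1) n2
    have step0 := BubbleAux.deg_lam_mul 0 _ n1
    have hform : u = lam 0 * (lam 1 * (lam 2 * (lam 3 * (lam 4 * ψ)))) := by
      rw [hψ, Fin.prod_univ_five]
      ring
    have hdeg : ψ.totalDegree + 5 ≤ u.totalDegree := by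
      rw [hform]
      omega
    omega
  · -- integral forces u = 0 : contradiction with hu0
    exfalso
    set S := {x : Fin 4 → ℝ | (∀ i, 0 ≤ x i) ∧ ∑ i, x i ≤ 1} with hSdef
    have hSclosed : IsClosed S := by
      have hS2 : S = (⋂ i, {x : Fin 4 → ℝ | 0 ≤ x i}) ∩ {x : Fin 4 → ℝ | ∑ i, x i ≤ 1} := by
        ext x
        simp [hSdef, Set.mem_iInter]
      rw [hS2]
      exact (isClosed_iInter fun i => isClosed_le continuous_const (continuous_apply i)).inter
        (isClosed_le (continuous_finset_sum _ fun i _ => continuous_apply i) continuous_const)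
    have hScompact : IsCompact S := by
      refine (isCompact_univ_pi fun _ : Fin 4 =>
        isCompact_Icc (a := (0:ℝ)) (b := 1)).of_isClosed_subset hSclosed ?_
      intro x hx
      refine Set.mem_univ_pi.mpr fun i => ⟨hx.1 i, ?_⟩
      calc x i ≤ ∑ j, x j := Finset.single_le_sum (fun j _ => hx.1 j) (Finset.mem_univ i)
        _ ≤ 1 := hx.2
    set f : (Fin 4 → ℝ) → ℝ := fun x => eval x u * eval x ψ with hfdef
    have hfc : Continuous f := (BubbleAux.continuous_eval u).mul (BubbleAux.continuous_eval ψ)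
    have hfeq : ∀ x, f x = (∏ i, eval x (lam i)) * (eval x ψ) ^ 2 := by
      intro x
      rw [hfdef]
      simp only [hψ, map_mul, map_prod]
      ring
    have hfnn : ∀ x ∈ S, 0 ≤ f x := by
      intro x hx
      rw [hfeq]
      exact mul_nonneg (Finset.prod_nonneg fun i _ => BubbleAux.eval_lam_nonneg hx i)
        (sq_nonneg _)
    have hfint : IntegrableOn f S := hfc.continuousOn.integrableOn_compact hScompact
    have hae : 0 ≤ᵐ[volume.restrict S] f := (ae_restrict_mem hSclosed.measurableSet).mono hfnn
    have hzero : f =ᵐ[volume.restrict S] 0 :=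
      (integral_eq_zero_iff_of_nonneg_ae hae hfint).mp hint
    set c : Fin 4 → ℝ := fun _ => 1/8 with hcdef
    set B := Metric.ball c (1/16) with hBdef
    have hBopen : IsOpen B := Metric.isOpen_ball
    have hBcoord : ∀ x ∈ B, ∀ i : Fin 4, 1/16 < x i ∧ x i < 3/16 := by
      intro x hx i
      have h1 : dist (x i) (c i) ≤ dist x c := dist_le_pi_dist x c i
      have h2 : dist x c < 1/16 := Metric.mem_ball.mp hx
      have h3 := lt_of_le_of_lt h1 h2
      rw [Real.dist_eq] at h3
      have h4 := abs_lt.mp h3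
      have hci : c i = 1/8 := rfl
      rw [hci] at h4
      exact ⟨by linarith [h4.1], by linarith [h4.2]⟩
    have hBsum : ∀ x ∈ B, ∑ j, x j < 3/4 := by
      intro x hx
      rw [Fin.sum_univ_four]
      have h0 := (hBcoord x hx 0).2
      have h1 := (hBcoord x hx 1).2
      have h2 := (hBcoord x hx 2).2
      have h3 := (hBcoord x hx 3).2
      linarith
    have hlampos : ∀ x ∈ B, ∀ i : Fin 5, 0 < eval x (lam i) := by
      intro x hx i
      rw [BubbleAux.eval_lam]
      split
      · exact lt_trans (by norm_num) (hBcoord x hx _).1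
      · linarith [hBsum x hx]
    have hBsubS : B ⊆ S := by
      intro x hx
      exact ⟨fun i => le_of_lt (lt_trans (by norm_num) (hBcoord x hx i).1),
        le_of_lt (lt_of_lt_of_le (hBsum x hx) (by norm_num))⟩
    have hx₀ : ∃ x₀ ∈ B, eval x₀ ψ ≠ 0 := by
      by_contra hcon
      push_neg at hcon
      exact hψ0 (BubbleAux.eq_zero_of_eqOn_open ψ B hBopen
        ⟨c, Metric.mem_ball_self (by norm_num)⟩ hcon)
    obtain ⟨x₀, hx₀B, hx₀ψ⟩ := hx₀
    have hfx₀ : 0 < f x₀ := by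
      rw [hfeq]
      exact mul_pos (Finset.prod_pos fun i _ => hlampos x₀ hx₀B i)
        (lt_of_le_of_ne (sq_nonneg _) (Ne.symm (pow_ne_zero 2 hx₀ψ)))
    set V := B ∩ {x | 0 < f x} with hVdef
    have hVopen : IsOpen V := hBopen.inter (isOpen_lt continuous_const hfc)
    have hVne : V.Nonempty := ⟨x₀, hx₀B, hfx₀⟩
    have hVpos : 0 < volume V := hVopen.measure_pos volume hVne
    have hVzero : volume V = 0 := by
      have hm : volume.restrict S {x | f x ≠ 0} = 0 := by
        have h' := hzero
        rw [Filter.EventuallyEq, Filter.eventually_iff, mem_ae_iff] at h'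
        simp only [Pi.zero_apply] at h'
        rwa [show {x : Fin 4 → ℝ | f x = 0}ᶜ = {x | f x ≠ 0} by ext y; simp] at h'
      have hmeasne : MeasurableSet {x : Fin 4 → ℝ | f x ≠ 0} :=
        ((isClosed_eq hfc continuous_const).isOpen_compl).measurableSet
      have hinter : volume ({x | f x ≠ 0} ∩ S) = 0 := by
        rw [← Measure.restrict_apply hmeasne]
        exact hm
      have hsub : V ⊆ {x | f x ≠ 0} ∩ S := fun x hx => ⟨ne_of_gt hx.2, hBsubS hx.1⟩
      exact le_antisymm (le_trans (measure_mono hsub) hinter.le) zero_le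
    exact absurd hVzero (ne_of_gt hVpos)
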